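/- Let G be a triangle-free graph that contains no induced K_{1,3}+3P_1, let x ∈ V(G) have three neighbours x_1,x_2,x_3, and let Y be the set of vertices in V(G) \ N[x] with no neighbour in {x_1,x_2,x_3}. Then the induced subgraph G[Y] has no independent set of size 3, and consequently |Y| ≤ 5. -/

import Mathlib

/-- K_{1,3} + 3P₁: a claw (0 adjacent to 1, 2, 3) plus three isolated vertices. -/
def K13plus3P1 : SimpleGraph (Fin 7) :=
  SimpleGraph.fromRel (fun a b => (a.val, b.val) ∈ [(0,1),(0,2),(0,3)])

lemma ramsey_aux {V : Type*} (G : SimpleGraph V) (s : Finset V) (hcard : 6 ≤ s.card)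
    (hA : ∀ a ∈ s, ∀ b ∈ s, ∀ c ∈ s, a ≠ b → a ≠ c → b ≠ c →
      ¬(G.Adj a b ∧ G.Adj a c ∧ G.Adj b c))
    (hI : ∀ a ∈ s, ∀ b ∈ s, ∀ c ∈ s, a ≠ b → a ≠ c → b ≠ c →
      ¬(¬G.Adj a b ∧ ¬G.Adj a c ∧ ¬G.Adj b c)) : False := by
  classical
  obtain ⟨y0, hy0⟩ : s.Nonempty := Finset.card_pos.mp (by omega)
  set t := s.erase y0 with ht
  have htc : 5 ≤ t.card := by
    have h' : t.card = s.card - 1 := by rw [ht]; exact Finset.card_erase_of_mem hy0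
    omega
  have hsplit := Finset.card_filter_add_card_filter_not
    (s := t) (p := fun v => G.Adj y0 v)
  set A := t.filter (fun v => G.Adj y0 v) with hAdef
  set B := t.filter (fun v => ¬ G.Adj y0 v) with hBdef
  have hmemA : ∀ v ∈ A, v ∈ s ∧ v ≠ y0 ∧ G.Adj y0 v := by
    intro v hv
    rw [hAdef, Finset.mem_filter] at hv
    exact ⟨Finset.mem_of_mem_erase hv.1, Finset.ne_of_mem_erase hv.1, hv.2⟩
  have hmemB : ∀ v ∈ B, v ∈ s ∧ v ≠ y0 ∧ ¬ G.Adj y0 v := by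
    intro v hv
    rw [hBdef, Finset.mem_filter] at hv
    exact ⟨Finset.mem_of_mem_erase hv.1, Finset.ne_of_mem_erase hv.1, hv.2⟩
  have hcases : 2 < A.card ∨ 2 < B.card := by omega
  rcases hcases with h | h
  · obtain ⟨a, ha, b, hb, c, hc, hab, hac, hbc⟩ := Finset.two_lt_card.mp h
    obtain ⟨has, hay, haj⟩ := hmemA a ha
    obtain ⟨hbs, hby, hbj⟩ := hmemA b hb
    obtain ⟨hcs, hcy, hcj⟩ := hmemA c hc
    by_cases e1 : G.Adj a b
    · exact hA y0 hy0 a has b hbs (Ne.symm hay) (Ne.symm hby) hab ⟨haj, hbj, e1⟩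
    by_cases e2 : G.Adj a c
    · exact hA y0 hy0 a has c hcs (Ne.symm hay) (Ne.symm hcy) hac ⟨haj, hcj, e2⟩
    by_cases e3 : G.Adj b c
    · exact hA y0 hy0 b hbs c hcs (Ne.symm hby) (Ne.symm hcy) hbc ⟨hbj, hcj, e3⟩
    exact hI a has b hbs c hcs hab hac hbc ⟨e1, e2, e3⟩
  · obtain ⟨a, ha, b, hb, c, hc, hab, hac, hbc⟩ := Finset.two_lt_card.mp h
    obtain ⟨has, hay, haj⟩ := hmemB a ha
    obtain ⟨hbs, hby, hbj⟩ := hmemB b hb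
    obtain ⟨hcs, hcy, hcj⟩ := hmemB c hc
    by_cases e1 : G.Adj a b
    · by_cases e2 : G.Adj a c
      · by_cases e3 : G.Adj b c
        · exact hA a has b hbs c hcs hab hac hbc ⟨e1, e2, e3⟩
        · exact hI y0 hy0 b hbs c hcs (Ne.symm hby) (Ne.symm hcy) hbc ⟨hbj, hcj, e3⟩
      · exact hI y0 hy0 a has c hcs (Ne.symm hay) (Ne.symm hcy) hac ⟨haj, hcj, e2⟩
    · exact hI y0 hy0 a has b hbs (Ne.symm hay) (Ne.symm hby) hab ⟨haj, hbj, e1⟩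

set_option maxHeartbeats 1000000 in
theorem statement_19 {V : Type*} (G : SimpleGraph V) (htri : G.CliqueFree 3)
    (hfree : IsEmpty (K13plus3P1 ↪g G)) (x x1 x2 x3 : V)
    (h1 : G.Adj x x1) (h2 : G.Adj x x2) (h3 : G.Adj x x3)
    (h12 : x1 ≠ x2) (h13 : x1 ≠ x3) (h23 : x2 ≠ x3) (Y : Set V)
    (hY : Y = {y | y ≠ x ∧ ¬ G.Adj x y ∧ ¬ G.Adj y x1 ∧ ¬ G.Adj y x2 ∧
      ¬ G.Adj y x3}) :
    (¬ ∃ y1 ∈ Y, ∃ y2 ∈ Y, ∃ y3 ∈ Y, y1 ≠ y2 ∧ y1 ≠ y3 ∧ y2 ≠ y3 ∧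
      ¬ G.Adj y1 y2 ∧ ¬ G.Adj y1 y3 ∧ ¬ G.Adj y2 y3) ∧
    Y.encard ≤ 5 := by
  classical
  have notri : ∀ a b c : V, G.Adj a b → G.Adj a c → ¬ G.Adj b c := by
    intro a b c hab hac hbc
    exact htri {a, b, c} (SimpleGraph.is3Clique_triple_iff.mpr ⟨hab, hac, hbc⟩)
  have hx12 : ¬ G.Adj x1 x2 := notri x x1 x2 h1 h2
  have hx13 : ¬ G.Adj x1 x3 := notri x x1 x3 h1 h3
  have hx23 : ¬ G.Adj x2 x3 := notri x x2 x3 h2 h3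
  have hYm : ∀ y ∈ Y, y ≠ x ∧ ¬ G.Adj x y ∧ ¬ G.Adj y x1 ∧ ¬ G.Adj y x2 ∧
      ¬ G.Adj y x3 := by
    intro y hy; rw [hY] at hy; exact hy
  have hK : ∀ a b : Fin 7, K13plus3P1.Adj a b ↔ (a ≠ b ∧
      ((a.val, b.val) ∈ [(0,1),(0,2),(0,3)] ∨ (b.val, a.val) ∈ [(0,1),(0,2),(0,3)])) :=
    fun a b => SimpleGraph.fromRel_adj _ a b
  have key : ¬ ∃ y1 ∈ Y, ∃ y2 ∈ Y, ∃ y3 ∈ Y, y1 ≠ y2 ∧ y1 ≠ y3 ∧ y2 ≠ y3 ∧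
      ¬ G.Adj y1 y2 ∧ ¬ G.Adj y1 y3 ∧ ¬ G.Adj y2 y3 := by
    rintro ⟨y1, hy1, y2, hy2, y3, hy3, n12, n13, n23, a12, a13, a23⟩
    obtain ⟨e1, f1, g11, g12, g13⟩ := hYm y1 hy1
    obtain ⟨e2, f2, g21, g22, g23⟩ := hYm y2 hy2
    obtain ⟨e3, f3, g31, g32, g33⟩ := hYm y3 hy3
    -- symmetric copies of adjacency facts
    have h1s := h1.symm; have h2s := h2.symm; have h3s := h3.symm
    have hx21 : ¬ G.Adj x2 x1 := fun h => hx12 h.symm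
    have hx31 : ¬ G.Adj x3 x1 := fun h => hx13 h.symm
    have hx32 : ¬ G.Adj x3 x2 := fun h => hx23 h.symm
    have f1s : ¬ G.Adj y1 x := fun h => f1 h.symm
    have f2s : ¬ G.Adj y2 x := fun h => f2 h.symm
    have f3s : ¬ G.Adj y3 x := fun h => f3 h.symm
    have g11s : ¬ G.Adj x1 y1 := fun h => g11 h.symm
    have g12s : ¬ G.Adj x2 y1 := fun h => g12 h.symm
    have g13s : ¬ G.Adj x3 y1 := fun h => g13 h.symm
    have g21s : ¬ G.Adj x1 y2 := fun h => g21 h.symm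
    have g22s : ¬ G.Adj x2 y2 := fun h => g22 h.symm
    have g23s : ¬ G.Adj x3 y2 := fun h => g23 h.symm
    have g31s : ¬ G.Adj x1 y3 := fun h => g31 h.symm
    have g32s : ¬ G.Adj x2 y3 := fun h => g32 h.symm
    have g33s : ¬ G.Adj x3 y3 := fun h => g33 h.symm
    have a21 : ¬ G.Adj y2 y1 := fun h => a12 h.symm
    have a31 : ¬ G.Adj y3 y1 := fun h => a13 h.symm
    have a32 : ¬ G.Adj y3 y2 := fun h => a23 h.symm
    -- distinctness facts
    have d1 : x ≠ x1 := h1.ne; have d1' : x1 ≠ x := h1.ne'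
    have d2 : x ≠ x2 := h2.ne; have d2' : x2 ≠ x := h2.ne'
    have d3 : x ≠ x3 := h3.ne; have d3' : x3 ≠ x := h3.ne'
    have h21 := h12.symm; have h31 := h13.symm; have h32 := h23.symm
    have e1' := e1.symm; have e2' := e2.symm; have e3' := e3.symm
    have p11 : y1 ≠ x1 := by rintro rfl; exact f1s h1.symm
    have p12 : y1 ≠ x2 := by rintro rfl; exact f1s h2.symm
    have p13 : y1 ≠ x3 := by rintro rfl; exact f1s h3.symm
    have p21 : y2 ≠ x1 := by rintro rfl; exact f2s h1.symm
    have p22 : y2 ≠ x2 := by rintro rfl; exact f2s h2.symm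
    have p23 : y2 ≠ x3 := by rintro rfl; exact f2s h3.symm
    have p31 : y3 ≠ x1 := by rintro rfl; exact f3s h1.symm
    have p32 : y3 ≠ x2 := by rintro rfl; exact f3s h2.symm
    have p33 : y3 ≠ x3 := by rintro rfl; exact f3s h3.symm
    have p11' := p11.symm; have p12' := p12.symm; have p13' := p13.symm
    have p21' := p21.symm; have p22' := p22.symm; have p23' := p23.symm
    have p31' := p31.symm; have p32' := p32.symm; have p33' := p33.symm
    have n21 := n12.symm; have n31 := n13.symm; have n32 := n23.symm
    refine hfree.elim ⟨⟨![x, x1, x2, x3, y1, y2, y3], ?_⟩, ?_⟩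
    · intro a b hab
      fin_cases a <;> fin_cases b <;>
        first
          | rfl
          | exact absurd hab (by assumption)
    · intro a b
      fin_cases a <;> fin_cases b <;>
        first
          | exact iff_of_true (by assumption) ((hK _ _).mpr (by decide))
          | exact iff_of_false G.irrefl
              (fun hadj => absurd ((hK _ _).mp hadj) (by decide))
          | exact iff_of_false (by assumption)
              (fun hadj => absurd ((hK _ _).mp hadj) (by decide))
  refine ⟨key, ?_⟩
  by_contra hle
  have h6 : 6 ≤ Y.encard := by
    rw [not_le] at hle
    exact Order.add_one_le_of_lt hle
  obtain ⟨T, hTY, hT6⟩ := Set.exists_subset_encard_eq h6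
  have hfin : T.Finite := Set.finite_of_encard_eq_coe (by exact_mod_cast hT6)
  have hcard : 6 ≤ hfin.toFinset.card := by
    have := hfin.encard_eq_coe_toFinset_card
    rw [hT6] at this
    exact_mod_cast this.le
  refine ramsey_aux G hfin.toFinset hcard ?_ ?_
  · intro a _ b _ c _ _ _ _ ⟨hab, hac, hbc⟩
    exact notri a b c hab hac hbc
  · intro a ha b hb c hc nab nac nbc ⟨hab, hac, hbc⟩
    rw [Set.Finite.mem_toFinset] at ha hb hc
    exact key ⟨a, hTY ha, b, hTY hb, c, hTY hc, nab, nac, nbc, hab, hac, hbc⟩
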